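/- For any synchronizing automaton 𝒜, any v-minimal word u and any i ∈ supp(u), the relation σ_i on ℐ_i is right-compatible with the product: if g σ_i f, then for every word a ∈ Σ* one has (g·θ_i(a)) σ_i (f·θ_i(a)). -/

import Mathlib

open scoped BigOperators

set_option synthInstance.maxHeartbeats 1000000
set_option maxHeartbeats 1000000

noncomputable section

/-- Action of a word on a state: `q · u`. -/
def actW {Q A : Type*} (δ : Q → A → Q) (q : Q) (u : List A) : Q :=
  u.foldl δ q

/-- The image `Q · u` of the full state set under a word. -/
def imageSet {Q A : Type*} [Fintype Q] [DecidableEq Q] (δ : Q → A → Q) (u : List A) :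
    Finset Q :=
  Finset.image (fun q => actW δ q u) Finset.univ

/-- The rank `rk(u) = |Q · u|` of a word. -/
def wordRank {Q A : Type*} [Fintype Q] [DecidableEq Q] (δ : Q → A → Q) (u : List A) : ℕ :=
  (imageSet δ u).card

/-- A word is reset (synchronizing) if `|Q · u| = 1`. -/
def IsReset {Q A : Type*} [Fintype Q] [DecidableEq Q] (δ : Q → A → Q) (u : List A) : Prop :=
  wordRank δ u = 1

/-- The automaton is synchronizing if it admits a reset word. -/
def IsSynchronizing {Q A : Type*} [Fintype Q] [DecidableEq Q] (δ : Q → A → Q) : Prop :=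
  ∃ u : List A, IsReset δ u

/-- `Syn(𝒜)`, the set of reset words. -/
def SynWords {Q A : Type*} [Fintype Q] [DecidableEq Q] (δ : Q → A → Q) : Set (List A) :=
  {u | IsReset δ u}

/-- The hyperplane `w⊥ = {v ∈ ℂQ : ∑ q, v q = 0}`. -/
def Wperp (Q : Type*) [Fintype Q] : Submodule ℂ (Q → ℂ) :=
  LinearMap.ker (∑ q : Q, (LinearMap.proj q : (Q → ℂ) →ₗ[ℂ] ℂ))

theorem mem_Wperp {Q : Type*} [Fintype Q] (v : Q → ℂ) :
    v ∈ Wperp Q ↔ ∑ q : Q, v q = 0 := by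
  simp [Wperp, LinearMap.mem_ker, LinearMap.sum_apply]

/-- The (right) action of a word on row vectors `v ↦ v·π(u)`. -/
def piLin {Q A : Type*} [Fintype Q] [DecidableEq Q] (δ : Q → A → Q) (u : List A) :
    (Q → ℂ) →ₗ[ℂ] (Q → ℂ) where
  toFun v := fun p => ∑ q ∈ Finset.univ.filter (fun q => actW δ q u = p), v q
  map_add' := by
    intro a b; funext p; simp [Finset.sum_add_distrib]
  map_smul' := by
    intro c v; funext p; simp [Finset.mul_sum]

theorem piLin_mem {Q A : Type*} [Fintype Q] [DecidableEq Q] (δ : Q → A → Q) (u : List A) :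
    ∀ v ∈ Wperp Q, piLin δ u v ∈ Wperp Q := by
  intro v hv
  rw [mem_Wperp] at hv ⊢
  have h := Finset.sum_fiberwise (Finset.univ : Finset Q) (fun q => actW δ q u) v
  calc ∑ p : Q, piLin δ u v p
      = ∑ p : Q, ∑ q ∈ Finset.univ.filter (fun q => actW δ q u = p), v q := rfl
    _ = ∑ q : Q, v q := h
    _ = 0 := hv

/-- The endomorphism of `w⊥` induced by a word. -/
def rhoEnd {Q A : Type*} [Fintype Q] [DecidableEq Q] (δ : Q → A → Q) (u : List A) :
    Module.End ℂ (Wperp Q) :=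
  (piLin δ u).restrict (piLin_mem δ u)

/-- The representation `ρ : Σ* → End(w⊥)`; we record it in the multiplicative opposite so
that `ρ (u ++ v) = ρ u * ρ v` (the paper's right-action convention). -/
def rho {Q A : Type*} [Fintype Q] [DecidableEq Q] (δ : Q → A → Q) (u : List A) :
    (Module.End ℂ (Wperp Q))ᵐᵒᵖ :=
  MulOpposite.op (rhoEnd δ u)

/-- `ℛ`, the ℂ-subalgebra generated by `ρ(Σ*)`. -/
def Ralg {Q A : Type*} [Fintype Q] [DecidableEq Q] (δ : Q → A → Q) :
    Subalgebra ℂ (Module.End ℂ (Wperp Q))ᵐᵒᵖ :=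
  Algebra.adjoin ℂ (Set.range (rho δ))

/-- `ρ(u)` seen as an element of `ℛ`. -/
def rhoR {Q A : Type*} [Fintype Q] [DecidableEq Q] (δ : Q → A → Q) (u : List A) :
    Ralg δ :=
  ⟨rho δ u, Algebra.subset_adjoin (Set.mem_range_self u)⟩

/-- The Jacobson radical `Rad(ℛ)` of `ℛ`, realised as a subset of the ambient algebra via
the standard characterisation: `x ∈ Rad(ℛ)` iff `x ∈ ℛ` and for every `y ∈ ℛ` the element
`1 - y * x` is left-invertible in `ℛ`. -/
def RadSet {Q A : Type*} [Fintype Q] [DecidableEq Q] (δ : Q → A → Q) :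
    Set (Module.End ℂ (Wperp Q))ᵐᵒᵖ :=
  {x | x ∈ Ralg δ ∧ ∀ y ∈ Ralg δ, ∃ z ∈ Ralg δ, z * (1 - y * x) = 1}

/-- `Rad(𝒜)`: the set of radical words, i.e. words `u` with `ρ(u) ∈ Rad(ℛ)`. -/
def RadWords {Q A : Type*} [Fintype Q] [DecidableEq Q] (δ : Q → A → Q) : Set (List A) :=
  {u | rho δ u ∈ RadSet δ}

/-- The automaton is semisimple when `Rad(𝒜) = Syn(𝒜)`. -/
def IsSemisimple {Q A : Type*} [Fintype Q] [DecidableEq Q] (δ : Q → A → Q) : Prop :=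
  RadWords δ = SynWords δ

/-- The `t`-packing number `D(t,r,n)`: the maximum size of a family of `r`-subsets of an
`n`-set in which every `t`-subset is contained in at most one member. -/
def packingNumber (t r n : ℕ) : ℕ :=
  sSup {m | ∃ F : Finset (Finset (Fin n)), F.card = m ∧ (∀ S ∈ F, S.card = r) ∧
    ∀ T : Finset (Fin n), T.card = t → (F.filter fun S => T ⊆ S).card ≤ 1}

/-- The former-rank `Fr(𝒜)`: the least rank of a non-reset word. -/
def formerRank {Q A : Type*} [Fintype Q] [DecidableEq Q] (δ : Q → A → Q) : ℕ :=
  sInf {m | ∃ u : List A, ¬ IsReset δ u ∧ wordRank δ u = m}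

/-- `Fs(𝒜)`: the set of former-synchronizing words. -/
def Fs {Q A : Type*} [Fintype Q] [DecidableEq Q] (δ : Q → A → Q) : Set (List A) :=
  {u | wordRank δ u = formerRank δ}

/-- `θ_i(u)`: the image of `ρ(u)` in the `i`-th Wedderburn–Artin matrix component, where
`e : ℛ → ∏ i, M_{n_i}(ℂ)` is the quotient map `ψ` followed by the fixed isomorphism. -/
def theta {Q A : Type*} [Fintype Q] [DecidableEq Q] (δ : Q → A → Q) {k : ℕ} {nn : Fin k → ℕ}
    (e : Ralg δ →ₐ[ℂ] ∀ i : Fin k, Matrix (Fin (nn i)) (Fin (nn i)) ℂ)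
    (u : List A) (i : Fin k) : Matrix (Fin (nn i)) (Fin (nn i)) ℂ :=
  e (rhoR δ u) i

/-- `supp(v) = {i : θ_i(v) ≠ 0}`. -/
def suppW {Q A : Type*} [Fintype Q] [DecidableEq Q] (δ : Q → A → Q) {k : ℕ} {nn : Fin k → ℕ}
    (e : Ralg δ →ₐ[ℂ] ∀ i : Fin k, Matrix (Fin (nn i)) (Fin (nn i)) ℂ)
    (v : List A) : Set (Fin k) :=
  {i | theta δ e v i ≠ 0}

/-- `u ∈ Σ* v Σ*`, i.e. `v` is a factor of `u`. -/
def InFactor {A : Type*} (v u : List A) : Prop :=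
  ∃ a b : List A, u = a ++ v ++ b

/-- `u` is a `v`-minimal word: `u ∈ Σ*vΣ*`, `supp(u)` is nonempty, and `supp(u)` is minimal
among the nonempty supports of words in `Σ*vΣ*`. -/
def IsVMinimal {Q A : Type*} [Fintype Q] [DecidableEq Q] (δ : Q → A → Q) {k : ℕ}
    {nn : Fin k → ℕ}
    (e : Ralg δ →ₐ[ℂ] ∀ i : Fin k, Matrix (Fin (nn i)) (Fin (nn i)) ℂ)
    (v u : List A) : Prop :=
  InFactor v u ∧ (suppW δ e u).Nonempty ∧
    ∀ z : List A, InFactor v z → suppW δ e z ⊆ suppW δ e u →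
      suppW δ e z = ∅ ∨ suppW δ e z = suppW δ e u

/-- The `i`-th factor monoid `ℳ_i = θ_i(Σ*)`. -/
def factorMonoid {Q A : Type*} [Fintype Q] [DecidableEq Q] (δ : Q → A → Q) {k : ℕ}
    {nn : Fin k → ℕ}
    (e : Ralg δ →ₐ[ℂ] ∀ i : Fin k, Matrix (Fin (nn i)) (Fin (nn i)) ℂ)
    (i : Fin k) : Set (Matrix (Fin (nn i)) (Fin (nn i)) ℂ) :=
  Set.range fun u : List A => theta δ e u i

/-- A two-sided ideal of the (sub)monoid `M`. -/
def IsSetIdeal {X : Type*} [Mul X] (M I : Set X) : Prop :=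
  I ⊆ M ∧ ∀ a ∈ M, ∀ x ∈ I, a * x ∈ I ∧ x * a ∈ I

/-- `I` is a `0`-minimal (two-sided) ideal of the monoid `M`. -/
def IsZeroMinimalIdeal {X : Type*} [Mul X] [Zero X] (M I : Set X) : Prop :=
  IsSetIdeal M I ∧ (0 : X) ∈ I ∧ I ≠ {0} ∧
    ∀ J : Set X, IsSetIdeal M J → (0 : X) ∈ J → J ⊆ I → J ≠ {0} → J = I

/-- `Rnk_i(g) = min {rk(u) : θ_i(u) = g}`. -/
def rnkElt {Q A : Type*} [Fintype Q] [DecidableEq Q] (δ : Q → A → Q) {k : ℕ}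
    {nn : Fin k → ℕ}
    (e : Ralg δ →ₐ[ℂ] ∀ i : Fin k, Matrix (Fin (nn i)) (Fin (nn i)) ℂ)
    (i : Fin k) (g : Matrix (Fin (nn i)) (Fin (nn i)) ℂ) : ℕ :=
  sInf {m | ∃ u : List A, theta δ e u i = g ∧ wordRank δ u = m}

/-- `Rnk(ℐ_i) = min {Rnk_i(g) : g ∈ ℐ_i ∖ {0}}`. -/
def rnkIdeal {Q A : Type*} [Fintype Q] [DecidableEq Q] (δ : Q → A → Q) {k : ℕ}
    {nn : Fin k → ℕ}
    (e : Ralg δ →ₐ[ℂ] ∀ i : Fin k, Matrix (Fin (nn i)) (Fin (nn i)) ℂ)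
    (i : Fin k) (I : Set (Matrix (Fin (nn i)) (Fin (nn i)) ℂ)) : ℕ :=
  sInf {m | ∃ g ∈ I, g ≠ 0 ∧ rnkElt δ e i g = m}

/-- `w` `u`-represents `g`: `w ∈ Σ*uΣ*`, `θ_i(w) = g`, and either `g = 0` or `rk(w)` is
minimum among all words with the first two properties. -/
def URepresents {Q A : Type*} [Fintype Q] [DecidableEq Q] (δ : Q → A → Q) {k : ℕ}
    {nn : Fin k → ℕ}
    (e : Ralg δ →ₐ[ℂ] ∀ i : Fin k, Matrix (Fin (nn i)) (Fin (nn i)) ℂ)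
    (u : List A) (i : Fin k) (w : List A) (g : Matrix (Fin (nn i)) (Fin (nn i)) ℂ) : Prop :=
  InFactor u w ∧ theta δ e w i = g ∧
    (g = 0 ∨ ∀ w' : List A, InFactor u w' → theta δ e w' i = g → wordRank δ w ≤ wordRank δ w')

/-- The relation `σ_i` on `ℐ_i`. -/
def sigmaRel {Q A : Type*} [Fintype Q] [DecidableEq Q] (δ : Q → A → Q) {k : ℕ}
    {nn : Fin k → ℕ}
    (e : Ralg δ →ₐ[ℂ] ∀ i : Fin k, Matrix (Fin (nn i)) (Fin (nn i)) ℂ)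
    (i : Fin k) (u : List A)
    (g f : Matrix (Fin (nn i)) (Fin (nn i)) ℂ) : Prop :=
  g = f ∨ ∃ w₁ w₂ : List A, URepresents δ e u i w₁ g ∧ URepresents δ e u i w₂ f ∧
    1 < (imageSet δ w₁ ∩ imageSet δ w₂).card

/-- `T ⊆ [1,k]` is a core. -/
def IsCore {Q A : Type*} [Fintype Q] [DecidableEq Q] (δ : Q → A → Q) {k : ℕ}
    {nn : Fin k → ℕ}
    (e : Ralg δ →ₐ[ℂ] ∀ i : Fin k, Matrix (Fin (nn i)) (Fin (nn i)) ℂ)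
    (T : Set (Fin k)) : Prop :=
  ∀ x : List A, (∀ i ∈ T, theta δ e x i = 0) → ∀ i : Fin k, theta δ e x i = 0

/-- A minimal core. -/
def IsMinimalCore {Q A : Type*} [Fintype Q] [DecidableEq Q] (δ : Q → A → Q) {k : ℕ}
    {nn : Fin k → ℕ}
    (e : Ralg δ →ₐ[ℂ] ∀ i : Fin k, Matrix (Fin (nn i)) (Fin (nn i)) ℂ)
    (T : Set (Fin k)) : Prop :=
  IsCore δ e T ∧ ∀ T' : Set (Fin k), T' ⊆ T → IsCore δ e T' → T' = T

/-- An automaton congruence. -/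
def IsCongruence {Q A : Type*} (δ : Q → A → Q) (σ : Q → Q → Prop) : Prop :=
  Equivalence σ ∧ ∀ q p : Q, σ q p → ∀ u : List A, σ (actW δ q u) (actW δ p u)

/-- A simple automaton: the only congruences are the identity and the universal relation. -/
def IsSimple {Q A : Type*} (δ : Q → A → Q) : Prop :=
  ∀ σ : Q → Q → Prop, IsCongruence δ σ → σ = Eq ∨ σ = fun _ _ => True


section Aux

variable {Q A : Type*} [Fintype Q] [DecidableEq Q] (δ : Q → A → Q)

lemma actW_append (q : Q) (x y : List A) :
    actW δ q (x ++ y) = actW δ (actW δ q x) y := by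
  simp [actW, List.foldl_append]

lemma piLin_append (x y : List A) (v : Q → ℂ) :
    piLin δ (x ++ y) v = piLin δ y (piLin δ x v) := by
  funext p
  show ∑ q ∈ Finset.univ.filter (fun q => actW δ q (x ++ y) = p), v q
      = ∑ r ∈ Finset.univ.filter (fun r => actW δ r y = p),
          ∑ q ∈ Finset.univ.filter (fun q => actW δ q x = r), v q
  rw [Finset.sum_fiberwise_eq_sum_filter]
  apply Finset.sum_congr _ (fun _ _ => rfl)
  ext q
  simp [actW_append]

lemma rhoEnd_append (x y : List A) :
    rhoEnd δ (x ++ y) = rhoEnd δ y * rhoEnd δ x := by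
  apply LinearMap.ext
  intro vv
  apply Subtype.ext
  simp [rhoEnd, Module.End.mul_apply, LinearMap.restrict_coe_apply, piLin_append]

lemma rhoR_append (x y : List A) :
    rhoR δ (x ++ y) = rhoR δ x * rhoR δ y := by
  apply Subtype.ext
  show rho δ (x ++ y) = rho δ x * rho δ y
  unfold rho
  rw [rhoEnd_append, MulOpposite.op_mul]

lemma piLin_nil (v : Q → ℂ) : piLin δ ([] : List A) v = v := by
  funext p
  show ∑ q ∈ Finset.univ.filter (fun q => actW δ q ([] : List A) = p), v q = v p
  rw [Finset.sum_filter]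
  exact (Finset.sum_eq_single p (fun b _ hb => if_neg hb) (fun h => absurd (Finset.mem_univ p) h)).trans (if_pos rfl)

lemma rhoR_nil : rhoR δ ([] : List A) = 1 := by
  apply Subtype.ext
  show rho δ ([] : List A) = 1
  unfold rho
  have : rhoEnd δ ([] : List A) = 1 := by
    apply LinearMap.ext
    intro vv
    apply Subtype.ext
    simp [rhoEnd, LinearMap.restrict_coe_apply, piLin_nil]
  rw [this, MulOpposite.op_one]

variable {k : ℕ} {nn : Fin k → ℕ}
  (e : Ralg δ →ₐ[ℂ] ∀ i : Fin k, Matrix (Fin (nn i)) (Fin (nn i)) ℂ)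

lemma theta_append (x y : List A) (i : Fin k) :
    theta δ e (x ++ y) i = theta δ e x i * theta δ e y i := by
  unfold theta
  rw [rhoR_append, map_mul, Pi.mul_apply]

lemma theta_nil (i : Fin k) : theta δ e ([] : List A) i = 1 := by
  unfold theta
  rw [rhoR_nil, map_one, Pi.one_apply]

lemma imageSet_append (x y : List A) :
    imageSet δ (x ++ y) = (imageSet δ x).image (fun q => actW δ q y) := by
  unfold imageSet
  rw [Finset.image_image]
  apply Finset.image_congr
  intro q _
  simp [actW_append]

lemma imageSet_append_subset_right (x y : List A) :
    imageSet δ (x ++ y) ⊆ imageSet δ y := by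
  intro p hp
  simp only [imageSet, Finset.mem_image] at hp ⊢
  obtain ⟨q, -, rfl⟩ := hp
  exact ⟨actW δ q x, Finset.mem_univ _, (actW_append δ q x y).symm⟩

lemma wordRank_append_le (x y : List A) :
    wordRank δ (x ++ y) ≤ wordRank δ x := by
  rw [wordRank, wordRank, imageSet_append]
  exact Finset.card_image_le

lemma wordRank_sandwich (p w q : List A) :
    wordRank δ (p ++ w ++ q) ≤ wordRank δ w :=
  le_trans (wordRank_append_le δ (p ++ w) q)
    (Finset.card_le_card (imageSet_append_subset_right δ p w))

lemma InFactor.app_right {u w : List A} (h : InFactor u w) (a : List A) :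
    InFactor u (w ++ a) := by
  obtain ⟨x, y, rfl⟩ := h
  exact ⟨x, y ++ a, by simp⟩

lemma InFactor.sandwich {u w : List A} (h : InFactor u w) (p q : List A) :
    InFactor u (p ++ w ++ q) := by
  obtain ⟨x, y, rfl⟩ := h
  exact ⟨p ++ x, y ++ q, by simp⟩

/-- Transfer lemma: if `g, f` are nonzero elements of the `0`-minimal ideal and `w` is a word
in `Σ*uΣ*` representing `g`, then `f` has a representative in `Σ*uΣ*` of rank at most
`rk(w)`.  Uses that `ℳ g ℳ ∪ {0}` is a nonzero ideal contained in `ℐ`, hence equal to it. -/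
lemma transfer (i : Fin k) (Ii : Set (Matrix (Fin (nn i)) (Fin (nn i)) ℂ))
    (hIi : IsZeroMinimalIdeal (factorMonoid δ e i) Ii)
    (u : List A) (g f : Matrix (Fin (nn i)) (Fin (nn i)) ℂ)
    (hg : g ∈ Ii) (hgne : g ≠ 0) (hf : f ∈ Ii) (hfne : f ≠ 0)
    (w : List A) (hw : InFactor u w) (hθ : theta δ e w i = g) :
    ∃ w', InFactor u w' ∧ theta δ e w' i = f ∧ wordRank δ w' ≤ wordRank δ w := by
  classical
  obtain ⟨⟨hsub, hmul⟩, h0, hne0, hmin⟩ := hIi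
  set J : Set (Matrix (Fin (nn i)) (Fin (nn i)) ℂ) :=
    {x | x = 0 ∨ ∃ p q : List A, theta δ e p i * g * theta δ e q i = x} with hJdef
  have hJideal : IsSetIdeal (factorMonoid δ e i) J := by
    constructor
    · rintro x (rfl | ⟨p, q, rfl⟩)
      · exact hsub h0
      · exact ⟨p ++ w ++ q, by
          show theta δ e (p ++ w ++ q) i = _
          rw [theta_append, theta_append, hθ]⟩
    · rintro m ⟨r, rfl⟩ x (rfl | ⟨p, q, rfl⟩)
      · constructor <;> simp [hJdef]
      · constructor
        · exact Or.inr ⟨r ++ p, q, by simp [theta_append, mul_assoc]⟩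
        · exact Or.inr ⟨p, q ++ r, by simp [theta_append, mul_assoc]⟩
  have hJsub : J ⊆ Ii := by
    rintro x (rfl | ⟨p, q, rfl⟩)
    · exact h0
    · exact (hmul _ ⟨q, rfl⟩ _ ((hmul _ ⟨p, rfl⟩ g hg).1)).2
  have hJ0 : (0 : Matrix (Fin (nn i)) (Fin (nn i)) ℂ) ∈ J := Or.inl rfl
  have hJne : J ≠ {0} := by
    intro h
    have hgJ : g ∈ J := Or.inr ⟨[], [], by simp [theta_nil]⟩
    rw [h] at hgJ
    exact hgne hgJ
  have hJeq : J = Ii := hmin J hJideal hJ0 hJsub hJne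
  have hfJ : f ∈ J := hJeq ▸ hf
  rcases hfJ with rfl | ⟨p, q, hpq⟩
  · exact absurd rfl hfne
  refine ⟨p ++ w ++ q, hw.sandwich p q, ?_, wordRank_sandwich δ p w q⟩
  rw [theta_append, theta_append, hθ, hpq]

/-- If `w` `u`-represents `g` and `g·θᵢ(a) ≠ 0` lies in the ideal, then `w ++ a`
`u`-represents `g·θᵢ(a)`, with the same rank as `w`. -/
lemma rep_mul (i : Fin k) (Ii : Set (Matrix (Fin (nn i)) (Fin (nn i)) ℂ))
    (hIi : IsZeroMinimalIdeal (factorMonoid δ e i) Ii)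
    (u : List A) (g : Matrix (Fin (nn i)) (Fin (nn i)) ℂ) (hg : g ∈ Ii)
    (w : List A) (hrep : URepresents δ e u i w g) (a : List A)
    (hga : g * theta δ e a i ∈ Ii) (hne : g * theta δ e a i ≠ 0) :
    URepresents δ e u i (w ++ a) (g * theta δ e a i) ∧
      wordRank δ (w ++ a) = wordRank δ w := by
  obtain ⟨hfac, hθw, hminw⟩ := hrep
  have hgne : g ≠ 0 := fun h => hne (by simp [h])
  have hminw' := hminw.resolve_left hgne
  have hfac' : InFactor u (w ++ a) := hfac.app_right a
  have hθ' : theta δ e (w ++ a) i = g * theta δ e a i := by rw [theta_append, hθw]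
  have key : ∀ w', InFactor u w' → theta δ e w' i = g * theta δ e a i →
      wordRank δ w ≤ wordRank δ w' := by
    intro w' hw' hθw'
    obtain ⟨w'', h1, h2, h3⟩ :=
      transfer δ e i Ii hIi u _ g hga hne hg hgne w' hw' hθw'
    exact le_trans (hminw' w'' h1 h2) h3
  have hrkeq : wordRank δ (w ++ a) = wordRank δ w :=
    le_antisymm (wordRank_append_le δ w a) (key _ hfac' hθ')
  exact ⟨⟨hfac', hθ', Or.inr fun w' hw' hθ'' =>
    le_trans hrkeq.le (key w' hw' hθ'')⟩, hrkeq⟩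

lemma injOn_of_rank_eq {w a : List A} (h : wordRank δ (w ++ a) = wordRank δ w) :
    Set.InjOn (fun q => actW δ q a) ↑(imageSet δ w) := by
  rw [← Finset.card_image_iff]
  rw [wordRank, wordRank, imageSet_append] at h
  exact h

lemma card_inter_lt (w₁ w₂ a : List A)
    (hinj : Set.InjOn (fun q => actW δ q a) ↑(imageSet δ w₁))
    (hcard : 1 < (imageSet δ w₁ ∩ imageSet δ w₂).card) :
    1 < (imageSet δ (w₁ ++ a) ∩ imageSet δ (w₂ ++ a)).card := by
  set S := imageSet δ w₁ ∩ imageSet δ w₂ with hS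
  have h1 : S.image (fun q => actW δ q a)
      ⊆ imageSet δ (w₁ ++ a) ∩ imageSet δ (w₂ ++ a) := by
    intro x hx
    simp only [Finset.mem_image] at hx
    obtain ⟨q, hq, rfl⟩ := hx
    rw [hS, Finset.mem_inter] at hq
    rw [Finset.mem_inter, imageSet_append, imageSet_append]
    exact ⟨Finset.mem_image_of_mem _ hq.1, Finset.mem_image_of_mem _ hq.2⟩
  have h2 : (S.image (fun q => actW δ q a)).card = S.card :=
    Finset.card_image_of_injOn
      (hinj.mono (Finset.coe_subset.mpr Finset.inter_subset_left))
  calc 1 < S.card := hcard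
    _ = (S.image (fun q => actW δ q a)).card := h2.symm
    _ ≤ _ := Finset.card_le_card h1

end Aux

theorem stmt7 {Q A : Type*} [Fintype Q] [DecidableEq Q] (δ : Q → A → Q)
    {k : ℕ} {nn : Fin k → ℕ}
    (e : Ralg δ →ₐ[ℂ] ∀ i : Fin k, Matrix (Fin (nn i)) (Fin (nn i)) ℂ)
    (he_surj : Function.Surjective e)
    (he_ker : ∀ x : Ralg δ, e x = 0 ↔ (x : (Module.End ℂ (Wperp Q))ᵐᵒᵖ) ∈ RadSet δ)
    (Ii : ∀ i : Fin k, Set (Matrix (Fin (nn i)) (Fin (nn i)) ℂ))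
    (hIi : ∀ i : Fin k, IsZeroMinimalIdeal (factorMonoid δ e i) (Ii i))
    (hIuniq : ∀ (i : Fin k) (J : Set (Matrix (Fin (nn i)) (Fin (nn i)) ℂ)),
      IsZeroMinimalIdeal (factorMonoid δ e i) J → J = Ii i)
    (hsync : IsSynchronizing δ)
    (v u : List A) (hu : IsVMinimal δ e v u) (i : Fin k) (hi : i ∈ suppW δ e u)
    (g f : Matrix (Fin (nn i)) (Fin (nn i)) ℂ) (hg : g ∈ Ii i) (hf : f ∈ Ii i)
    (hgf : sigmaRel δ e i u g f) :
    ∀ a : List A, sigmaRel δ e i u (g * theta δ e a i) (f * theta δ e a i) := by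
  intro a
  rcases hgf with rfl | ⟨w₁, w₂, h1, h2, hcard⟩
  · exact Or.inl rfl
  by_cases heq : g * theta δ e a i = f * theta δ e a i
  · exact Or.inl heq
  right
  have hga : g * theta δ e a i ∈ Ii i := ((hIi i).1.2 _ ⟨a, rfl⟩ g hg).2
  have hfa : f * theta δ e a i ∈ Ii i := ((hIi i).1.2 _ ⟨a, rfl⟩ f hf).2
  by_cases hg0 : g * theta δ e a i = 0
  · have hf0 : f * theta δ e a i ≠ 0 := fun h => heq (by rw [hg0, h])
    obtain ⟨hrep₂, hrk₂⟩ := rep_mul δ e i (Ii i) (hIi i) u f hf w₂ h2 a hfa hf0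
    refine ⟨w₁ ++ a, w₂ ++ a,
      ⟨h1.1.app_right a, by rw [theta_append, h1.2.1], Or.inl hg0⟩, hrep₂, ?_⟩
    have hinj := injOn_of_rank_eq δ hrk₂
    rw [Finset.inter_comm]
    exact card_inter_lt δ w₂ w₁ a hinj (by rwa [Finset.inter_comm])
  · by_cases hf0 : f * theta δ e a i = 0
    · obtain ⟨hrep₁, hrk₁⟩ := rep_mul δ e i (Ii i) (hIi i) u g hg w₁ h1 a hga hg0
      refine ⟨w₁ ++ a, w₂ ++ a, hrep₁,
        ⟨h2.1.app_right a, by rw [theta_append, h2.2.1], Or.inl hf0⟩, ?_⟩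
      exact card_inter_lt δ w₁ w₂ a (injOn_of_rank_eq δ hrk₁) hcard
    · obtain ⟨hrep₁, hrk₁⟩ := rep_mul δ e i (Ii i) (hIi i) u g hg w₁ h1 a hga hg0
      obtain ⟨hrep₂, hrk₂⟩ := rep_mul δ e i (Ii i) (hIi i) u f hf w₂ h2 a hfa hf0
      exact ⟨w₁ ++ a, w₂ ++ a, hrep₁, hrep₂,
        card_inter_lt δ w₁ w₂ a (injOn_of_rank_eq δ hrk₁) hcard⟩

end
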